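/- Let λ ∈ ℂ, λ ≠ 0, let d ∈ ℕ, and let x*y ∈ ℂ be nonzero with ξ := arg(x*y). There exists ω ∈ ℂ with |ω| = 1 such that ω·sign(λ^k)·(x*y) ∈ ℝ for all k = 0,…,d (with d ≥ 1) if and only if λ ∈ ℝ, where sign(z) = conj(z)/|z|. -/

import Mathlib

/-- `sign(z) = conj(z)/|z|` for `z ≠ 0`, and `sign(0) = 1`. -/
noncomputable def csign (z : ℂ) : ℂ :=
  if z = 0 then 1 else (starRingEnd ℂ) z / ((‖z‖ : ℝ) : ℂ)

lemma csign_im_of_real {z : ℂ} (hz : z.im = 0) : (csign z).im = 0 := by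
  unfold csign
  split
  · simp
  · simp [Complex.div_im, Complex.conj_im, hz]

theorem hermitian_reality_condition (lam : ℂ) (hlam : lam ≠ 0) (d : ℕ) (hd : 1 ≤ d)
    (ζ : ℂ) (hζ : ζ ≠ 0) :
    (∃ ω : ℂ, ‖ω‖ = 1 ∧ ∀ k : ℕ, k ≤ d → (ω * csign (lam ^ k) * ζ).im = 0) ↔
      lam.im = 0 := by
  constructor
  · rintro ⟨ω, hω, h⟩
    have hω0 : ω ≠ 0 := by
      intro h0; simp [h0] at hω
    have h0 := h 0 (Nat.zero_le _)
    have h1 := h 1 hd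
    have hcs1 : csign (lam ^ 0) = 1 := by simp [csign]
    rw [hcs1, mul_one] at h0
    -- h0 : (ω * ζ).im = 0
    have habs : (‖lam‖ : ℝ) ≠ 0 := by
      simpa using (norm_ne_zero_iff.mpr hlam)
    have hcs : csign (lam ^ 1) = (starRingEnd ℂ) lam / ((‖lam‖ : ℝ) : ℂ) := by
      simp [csign, hlam]
    rw [hcs] at h1
    have hrw : ω * ((starRingEnd ℂ) lam / ((‖lam‖ : ℝ) : ℂ)) * ζ
        = (ω * ζ * (starRingEnd ℂ) lam) / ((‖lam‖ : ℝ) : ℂ) := by ring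
    rw [hrw] at h1
    have h1' : (ω * ζ * (starRingEnd ℂ) lam).im = 0 := by
      rw [Complex.div_ofReal_im] at h1
      exact (div_eq_zero_iff.mp h1).resolve_right habs
    have hre : (ω * ζ).re ≠ 0 := by
      intro hr
      have : ω * ζ = 0 := by
        apply Complex.ext <;> simp [hr, h0]
      exact (mul_ne_zero hω0 hζ) this
    have : (ω * ζ).re * (-lam.im) = 0 := by
      have := h1'
      rw [Complex.mul_im] at this
      simpa [h0, Complex.conj_im] using this
    have := mul_eq_zero.mp this
    rcases this with h | h
    · exact absurd h hre
    · linarith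
  · intro hre
    refine ⟨(starRingEnd ℂ) ζ / ((‖ζ‖ : ℝ) : ℂ), ?_, ?_⟩
    · rw [norm_div]
      simp [hζ]
    · intro k hk
      have hpow : (lam ^ k).im = 0 := by
        have : lam = (lam.re : ℂ) := by
          apply Complex.ext <;> simp [hre]
        rw [this]
        simp [← Complex.ofReal_pow]
      have hcs := csign_im_of_real hpow
      have : (starRingEnd ℂ) ζ / ((‖ζ‖ : ℝ) : ℂ) * csign (lam ^ k) * ζ
          = csign (lam ^ k) * ((starRingEnd ℂ) ζ * ζ) / ((‖ζ‖ : ℝ) : ℂ) := by ring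
      rw [this, mul_comm ((starRingEnd ℂ) ζ) ζ, Complex.mul_conj]
      simp [Complex.div_ofReal_im, Complex.mul_im, hcs]
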